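/- For all positive integers m and n, the integer ∑_{d | n} (−1)^(m(n+d)) · μ(n/d) · C((m+1)d − 1, md) is nonnegative and divisible by n², where the sum is over positive divisors d of n, μ is the Möbius function, and C(·,·) is a binomial coefficient. (This is the integrality and nonnegativity of the numerical Donaldson–Thomas invariant of the (m+1)-loop quiver.) -/

import Mathlib

open Finset ArithmeticFunction

namespace DTaux

def c (m d : ℕ) : ℕ := ((m + 1) * d - 1).choose (m * d)

lemma choose_le_succ_succ (n k : ℕ) : n.choose k ≤ (n + 1).choose (k + 1) := by
  rw [Nat.choose_succ_succ]; exact Nat.le_add_right _ _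
lemma choose_le_add (n k j : ℕ) : n.choose k ≤ (n + j).choose (k + j) := by
  induction j with
  | zero => exact le_rfl
  | succ j ih => exact ih.trans (choose_le_succ_succ (n + j) (k + j))

lemma two_c_le (m d : ℕ) (hm : 0 < m) (hd : 0 < d) : 2 * c m d ≤ c m (d + 1) := by
  obtain ⟨e, rfl⟩ : ∃ e, m = e + 1 := ⟨m - 1, by omega⟩
  unfold c
  have ha : 1 ≤ (e + 1 + 1) * d := Nat.one_le_iff_ne_zero.mpr (by positivity)
  have h1 : (e + 1 + 1) * (d + 1) - 1 = ((e + 1 + 1) * d - 1) + e + 1 + 1 := by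
    have : (e + 1 + 1) * (d + 1) = (e + 1 + 1) * d + (e + 1 + 1) := by ring
    omega
  have h2 : (e + 1) * (d + 1) = (e + 1) * d + e + 1 := by ring
  rw [h1, h2]
  set X := (e + 1 + 1) * d - 1
  set K := (e + 1) * d
  have hsplit : (X + e + 1 + 1).choose (K + e + 1) =
      (X + e + 1).choose (K + e) + (X + e + 1).choose (K + e + 1) := by
    have := Nat.choose_succ_succ (X + e + 1) (K + e)
    simpa using this
  have hb1 : X.choose K ≤ (X + e + 1).choose (K + e) := by
    have := choose_le_add X K e
    exact this.trans (Nat.choose_le_choose _ (by omega))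
  have hb2 : X.choose K ≤ (X + e + 1).choose (K + e + 1) := by
    have := choose_le_add X K (e + 1)
    simpa [add_assoc] using this
  omega

lemma sum_c_le (m t : ℕ) (hm : 0 < m) (ht : 1 ≤ t) :
    ∑ d ∈ Icc 1 t, c m d ≤ 2 * c m t := by
  induction t with
  | zero => omega
  | succ t ih =>
    rcases Nat.eq_or_lt_of_le ht with h1 | h1
    · simp [← h1]; omega
    · have ht' : 1 ≤ t := by omega
      have := ih ht'
      rw [Finset.sum_Icc_succ_top (by omega)]
      have := two_c_le m t hm ht'
      omega

open ArithmeticFunction in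
lemma nonneg_part (m n : ℕ) (hm : 0 < m) (hn : 0 < n) :
    0 ≤ ∑ d ∈ n.divisors,
        (-1 : ℤ) ^ (m * (n + d)) * moebius (n / d) * (c m d : ℤ) := by
  set f : ℕ → ℤ := fun d => (-1 : ℤ) ^ (m * (n + d)) * moebius (n / d) * (c m d : ℤ) with hf
  have hmem : n ∈ n.divisors := Nat.mem_divisors_self n hn.ne'
  have hfn : f n = (c m n : ℤ) := by
    have h1 : (-1 : ℤ) ^ (m * (n + n)) = 1 := by
      have : m * (n + n) = 2 * (m * n) := by ring
      rw [this, pow_mul]; simp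
    simp [hf, Nat.div_self hn, h1]
  rw [← Finset.add_sum_erase _ f hmem, hfn]
  rcases Nat.eq_or_lt_of_le hn with h1 | h1
  · rw [← h1]
    simp [Nat.divisors_one]
  -- n ≥ 2
  have habs : ∀ d ∈ n.divisors.erase n, |f d| ≤ (c m d : ℤ) := by
    intro d _
    have : |f d| = |(-1 : ℤ) ^ (m * (n + d))| * |(moebius (n / d) : ℤ)| * (c m d : ℤ) := by
      rw [abs_mul, abs_mul]; simp
    rw [this, abs_pow, abs_neg, abs_one, one_pow, one_mul]
    have := abs_moebius_le_one (n := n / d)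
    nlinarith [Int.natCast_nonneg (c m d), abs_nonneg ((moebius (n/d) : ℤ))]
  have hsub : n.divisors.erase n ⊆ Icc 1 (n - 1) := by
    intro d hd
    rw [Finset.mem_erase] at hd
    have h2 := Nat.pos_of_mem_divisors hd.2
    have h3 := Nat.le_of_dvd hn (Nat.mem_divisors.mp hd.2).1
    rw [Finset.mem_Icc]
    omega
  have hbound : |∑ d ∈ n.divisors.erase n, f d| ≤ (c m n : ℤ) := by
    calc |∑ d ∈ n.divisors.erase n, f d| ≤ ∑ d ∈ n.divisors.erase n, |f d| :=
          Finset.abs_sum_le_sum_abs _ _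
      _ ≤ ∑ d ∈ n.divisors.erase n, (c m d : ℤ) := Finset.sum_le_sum habs
      _ ≤ ∑ d ∈ Icc 1 (n - 1), (c m d : ℤ) :=
          Finset.sum_le_sum_of_subset_of_nonneg hsub (by intros; positivity)
      _ ≤ (c m n : ℤ) := by
          have h4 := sum_c_le m (n - 1) hm (by omega)
          have h5 := two_c_le m (n - 1) hm (by omega)
          have h6 : n - 1 + 1 = n := by omega
          rw [h6] at h5
          push_cast
          exact_mod_cast (Nat.cast_le (α := ℤ)).mpr (h4.trans h5)
  have := abs_le.mp hbound
  linarith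

lemma mem_aux {p B : ℕ} (hp : 0 < p) :
    (∀ a ∈ (Ico 1 (B * p + 1)).filter (fun i => p ∣ i), a / p ∈ Ico 1 (B + 1)) ∧
    (∀ j ∈ Ico 1 (B + 1), j * p ∈ (Ico 1 (B * p + 1)).filter (fun i => p ∣ i)) ∧
    (∀ a ∈ (Ico 1 (B * p + 1)).filter (fun i => p ∣ i), a / p * p = a) ∧
    (∀ j ∈ Ico 1 (B + 1), j * p / p = j) := by
  refine ⟨?_, ?_, ?_, fun j _ => Nat.mul_div_cancel j hp⟩
  · intro a ha
    simp only [mem_filter, mem_Ico] at ha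
    obtain ⟨⟨h1, h2⟩, t, rfl⟩ := ha
    have ht : p * t / p = t := Nat.mul_div_cancel_left _ hp
    rw [ht, mem_Ico]
    have hc : p * t ≤ p * B := by rw [mul_comm p B]; omega
    have htB := Nat.le_of_mul_le_mul_left hc hp
    rcases Nat.eq_zero_or_pos t with h | h
    · subst h; simp at h1
    · exact ⟨h, by omega⟩
  · intro j hj
    simp only [mem_Ico] at hj
    simp only [mem_filter, mem_Ico]
    refine ⟨⟨by nlinarith, by nlinarith [hj.2]⟩, dvd_mul_left p j⟩
  · intro a ha
    simp only [mem_filter] at ha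
    exact Nat.div_mul_cancel ha.2

lemma filter_dvd_prod {M : Type*} [CommMonoid M] (p B : ℕ) (hp : 0 < p) (g : ℕ → M) :
    ∏ i ∈ (Ico 1 (B * p + 1)).filter (fun i => p ∣ i), g i
      = ∏ j ∈ Ico 1 (B + 1), g (j * p) := by
  obtain ⟨h1, h2, h3, h4⟩ := mem_aux (B := B) hp
  refine Finset.prod_nbij' (fun i => i / p) (fun j => j * p) h1 h2 h3 h4 ?_
  intro a ha
  rw [h3 a ha]

lemma filter_dvd_card (p B : ℕ) (hp : 0 < p) :
    ((Ico 1 (B * p + 1)).filter (fun i => p ∣ i)).card = B := by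
  obtain ⟨h1, h2, h3, h4⟩ := mem_aux (B := B) hp
  rw [Finset.card_nbij' (fun i => i / p) (fun j => j * p) h1 h2 h3 h4, Nat.card_Ico]
  omega

lemma card_S (p B : ℕ) (hp : 0 < p) :
    ((Ico 1 (B * p + 1)).filter (fun i => ¬ p ∣ i)).card = B * p - B := by
  have h1 := Finset.card_filter_add_card_filter_not
    (s := Ico 1 (B * p + 1)) (p := fun i => p ∣ i)
  have h2 := filter_dvd_card p B hp
  have h3 : (Ico 1 (B * p + 1)).card = B * p := by
    rw [Nat.card_Ico]; omega
  omega

lemma prod_Ico_sub (A k : ℕ) :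
    ∏ i ∈ Ico 1 (k + 1), (A - i) = (A - 1).descFactorial k := by
  rw [Nat.descFactorial_eq_prod_range, Finset.prod_Ico_eq_prod_range]
  refine Finset.prod_congr (by rw [Nat.add_sub_cancel]) ?_
  intro i _
  omega

lemma key_identity (p A B : ℕ) (hp : p.Prime) (hAB : B < A) :
    (∏ i ∈ (Ico 1 (B * p + 1)).filter (fun i => ¬ p ∣ i), i) * (A * p - 1).choose (B * p)
      = (A - 1).choose B *
        ∏ i ∈ (Ico 1 (B * p + 1)).filter (fun i => ¬ p ∣ i), (A * p - i) := by
  have hp0 : 0 < p := hp.pos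
  set Q := ∏ i ∈ (Ico 1 (B * p + 1)).filter (fun i => ¬ p ∣ i), i with hQ
  set R := ∏ i ∈ (Ico 1 (B * p + 1)).filter (fun i => ¬ p ∣ i), (A * p - i) with hR
  -- full products
  have e1 : ∏ i ∈ Ico 1 (B * p + 1), (A * p - i) = Nat.factorial (B * p) * (A * p - 1).choose (B * p) := by
    rw [prod_Ico_sub, Nat.descFactorial_eq_factorial_mul_choose]
  have e2 : ∏ i ∈ Ico 1 (B * p + 1), i = Nat.factorial (B * p) := Finset.prod_Ico_id_eq_factorial (B * p)
  -- split into multiples and non-multiples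
  have s1 : ∏ i ∈ Ico 1 (B * p + 1), (A * p - i)
      = (∏ i ∈ (Ico 1 (B * p + 1)).filter (fun i => p ∣ i), (A * p - i)) * R :=
    (Finset.prod_filter_mul_prod_filter_not _ _ _).symm
  have s2 : ∏ i ∈ Ico 1 (B * p + 1), i
      = (∏ i ∈ (Ico 1 (B * p + 1)).filter (fun i => p ∣ i), i) * Q :=
    (Finset.prod_filter_mul_prod_filter_not _ _ _).symm
  -- multiples part
  have m1 : ∏ i ∈ (Ico 1 (B * p + 1)).filter (fun i => p ∣ i), (A * p - i)
      = (Nat.factorial B * (A - 1).choose B) * p ^ B := by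
    rw [filter_dvd_prod p B hp0]
    have : ∀ j ∈ Ico 1 (B + 1), A * p - j * p = (A - j) * p := by
      intro j _
      rw [Nat.sub_mul]
    rw [Finset.prod_congr rfl this, Finset.prod_mul_distrib, Finset.prod_const, Nat.card_Ico,
      prod_Ico_sub, Nat.descFactorial_eq_factorial_mul_choose]
    norm_num
  have m2 : ∏ i ∈ (Ico 1 (B * p + 1)).filter (fun i => p ∣ i), i = Nat.factorial B * p ^ B := by
    rw [filter_dvd_prod p B hp0, Finset.prod_mul_distrib, Finset.prod_const, Nat.card_Ico,
      Finset.prod_Ico_id_eq_factorial]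
    norm_num
  -- combine
  have comb : Nat.factorial B * p ^ B * (Q * (A * p - 1).choose (B * p))
      = Nat.factorial B * p ^ B * ((A - 1).choose B * R) := by
    have h1 : (Nat.factorial B * p ^ B) * Q * (A * p - 1).choose (B * p)
        = Nat.factorial (B * p) * (A * p - 1).choose (B * p) := by rw [← m2, ← s2, e2]
    have h2 : Nat.factorial (B * p) * (A * p - 1).choose (B * p)
        = (Nat.factorial B * (A - 1).choose B * p ^ B) * R := by rw [← e1, s1, m1]
    calc Nat.factorial B * p ^ B * (Q * (A * p - 1).choose (B * p))
        = (Nat.factorial B * p ^ B) * Q * (A * p - 1).choose (B * p) := by ring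
      _ = (Nat.factorial B * (A - 1).choose B * p ^ B) * R := by rw [h1, h2]
      _ = Nat.factorial B * p ^ B * ((A - 1).choose B * R) := by ring
  exact Nat.eq_of_mul_eq_mul_left (by positivity) comb

lemma prod_sub_mod (S : Finset ℕ) (x : ℤ) :
    (x ^ 2 : ℤ) ∣ (∏ i ∈ S, (x - (i : ℤ)))
      - (-1) ^ S.card * ((∏ i ∈ S, (i : ℤ))
          - x * ∑ i ∈ S, ∏ j ∈ S.erase i, (j : ℤ)) := by
  classical
  induction S using Finset.induction_on with
  | empty => simp
  | insert a S ha ih =>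
    obtain ⟨r, hr⟩ := ih
    have hsum : ∑ i ∈ insert a S, ∏ j ∈ (insert a S).erase i, (j : ℤ)
        = (∏ j ∈ S, (j : ℤ)) + (a : ℤ) * ∑ i ∈ S, ∏ j ∈ S.erase i, (j : ℤ) := by
      rw [Finset.sum_insert ha, Finset.erase_insert ha, Finset.mul_sum]
      congr 1
      refine Finset.sum_congr rfl ?_
      intro i hi
      have hne : a ≠ i := fun h => ha (h ▸ hi)
      have hnotmem : a ∉ S.erase i := fun h => ha (Finset.mem_of_mem_erase h)
      rw [Finset.erase_insert_of_ne hne, Finset.prod_insert hnotmem]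
    refine ⟨(x - (a : ℤ)) * r - (-1) ^ S.card * ∑ i ∈ S, ∏ j ∈ S.erase i, (j : ℤ), ?_⟩
    rw [Finset.prod_insert ha, Finset.prod_insert ha, Finset.card_insert_of_notMem ha, hsum]
    linear_combination (x - (a : ℤ)) * hr

lemma T_dvd (p B : ℕ)
    (hnf : ∀ i ∈ (Ico 1 (B * p + 1)).filter (fun i => ¬ p ∣ i), 2 * i ≠ B * p) :
    (B * p) ∣ ∑ i ∈ (Ico 1 (B * p + 1)).filter (fun i => ¬ p ∣ i),
      ∏ j ∈ ((Ico 1 (B * p + 1)).filter (fun i => ¬ p ∣ i)).erase i, j := by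
  classical
  set S := (Ico 1 (B * p + 1)).filter (fun i => ¬ p ∣ i) with hS
  set f : ℕ → ℕ := fun i => ∏ j ∈ S.erase i, j with hf
  have hmem : ∀ i, i ∈ S ↔ 1 ≤ i ∧ i ≤ B * p ∧ ¬ p ∣ i := by
    intro i
    simp only [hS, mem_filter, mem_Ico]
    omega
  have hdvdBp : p ∣ B * p := dvd_mul_left p B
  have hsig : ∀ i ∈ S, (B * p - i ∈ S ∧ B * p - i ≠ i ∧ B * p - (B * p - i) = i ∧ i < B * p) := by
    intro i hi
    rw [hmem] at hi
    obtain ⟨h1, h2, h3⟩ := hi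
    have hne : i ≠ B * p := fun h => h3 (h ▸ hdvdBp)
    have hndvd : ¬ p ∣ B * p - i := by
      intro hd
      have := Nat.dvd_sub hdvdBp hd
      rw [show B * p - (B * p - i) = i by omega] at this
      exact h3 this
    have h2i : 2 * i ≠ B * p := hnf i (by rw [← hS] at *; rw [hmem]; exact ⟨h1, h2, h3⟩)
    exact ⟨(hmem _).mpr ⟨by omega, by omega, hndvd⟩, by omega, by omega, by omega⟩
  rw [← Finset.sum_filter_add_sum_filter_not S (fun i => 2 * i < B * p) f]
  have hswap : ∑ i ∈ S.filter (fun i => ¬ 2 * i < B * p), f i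
      = ∑ i ∈ S.filter (fun i => 2 * i < B * p), f (B * p - i) := by
    refine Finset.sum_nbij' (fun i => B * p - i) (fun i => B * p - i) ?_ ?_ ?_ ?_ ?_
    · intro a ha
      simp only [mem_filter] at ha ⊢
      obtain ⟨hσS, hσne, hσσ, hlt⟩ := hsig a ha.1
      refine ⟨hσS, ?_⟩
      have h2a : 2 * a ≠ B * p := hnf a ha.1
      omega
    · intro a ha
      simp only [mem_filter] at ha ⊢
      obtain ⟨hσS, hσne, hσσ, hlt⟩ := hsig a ha.1
      refine ⟨hσS, ?_⟩
      have := (hmem a).mp ha.1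
      omega
    · intro a ha
      simp only [mem_filter] at ha
      exact (hsig a ha.1).2.2.1
    · intro a ha
      simp only [mem_filter] at ha
      exact (hsig a ha.1).2.2.1
    · intro a ha
      simp only [mem_filter] at ha
      rw [(hsig a ha.1).2.2.1]
  rw [hswap, ← Finset.sum_add_distrib]
  refine Finset.dvd_sum ?_
  intro i hi
  simp only [mem_filter] at hi
  obtain ⟨hiS, hilt⟩ := hi
  obtain ⟨hσS, hσne, hσσ, hlt⟩ := hsig i hiS
  have hσmem : B * p - i ∈ S.erase i := Finset.mem_erase.mpr ⟨hσne, hσS⟩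
  have himem : i ∈ S.erase (B * p - i) := Finset.mem_erase.mpr ⟨fun h => hσne h.symm, hiS⟩
  have e1 : f i = (B * p - i) * ∏ j ∈ (S.erase i).erase (B * p - i), j :=
    (Finset.mul_prod_erase _ _ hσmem).symm
  have e2 : f (B * p - i) = i * ∏ j ∈ (S.erase i).erase (B * p - i), j := by
    show ∏ j ∈ S.erase (B * p - i), j = _
    rw [← Finset.mul_prod_erase _ _ himem, Finset.erase_right_comm]
  rw [e1, e2, ← Nat.add_mul]
  have : B * p - i + i = B * p := by omega
  rw [this]
  exact Dvd.intro _ rfl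

lemma key (p m N k : ℕ) (hp : p.Prime) (hm : 0 < m) (hN : 0 < N) (hk : 0 < k)
    (hdvd : p ^ (k - 1) ∣ N) :
    ((p : ℤ) ^ (2 * k)) ∣ (c m (N * p) : ℤ) - (-1) ^ ((p - 1) * (m * N)) * (c m N : ℤ) := by
  classical
  have hp0 : 0 < p := hp.pos
  set A := (m + 1) * N with hA
  set B := m * N with hB
  have hAB : B < A := by
    have : (m + 1) * N = m * N + N := by ring
    omega
  set S := (Ico 1 (B * p + 1)).filter (fun i => ¬ p ∣ i) with hS
  set Qn := ∏ i ∈ S, i with hQn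
  set Rn := ∏ i ∈ S, (A * p - i) with hRn
  set Tn := ∑ i ∈ S, ∏ j ∈ S.erase i, j with hTn
  set x : ℤ := ((A * p : ℕ) : ℤ) with hx
  -- the integer identity, cast to ℤ
  have hcmNp : c m (N * p) = (A * p - 1).choose (B * p) := by
    rw [c, hA, hB, mul_assoc, mul_assoc]
  have hcmN : c m N = (A - 1).choose B := rfl
  have iden : (Qn : ℤ) * (c m (N * p) : ℤ) = (c m N : ℤ) * (Rn : ℤ) := by
    rw [hcmNp, hcmN]
    exact_mod_cast congrArg (Nat.cast : ℕ → ℤ) (key_identity p A B hp hAB)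
  -- rewrite Rn as a product of differences
  have hRcast : (Rn : ℤ) = ∏ i ∈ S, (x - (i : ℤ)) := by
    rw [hRn, Nat.cast_prod]
    refine Finset.prod_congr rfl ?_
    intro i hi
    have : i ≤ A * p := by
      simp only [hS, mem_filter, mem_Ico] at hi
      nlinarith [hi.1.2]
    rw [Nat.cast_sub this]
  -- p-adic facts
  have hpk_dvd_aux : ∀ C : ℕ, N ∣ C → p ^ k ∣ C * p := by
    intro C hC
    have h1 : p ^ (k - 1) ∣ C := hdvd.trans hC
    have h2 : p ^ k = p ^ (k - 1) * p := by
      rw [← pow_succ]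
      congr 1
      omega
    rw [h2]
    exact mul_dvd_mul h1 dvd_rfl
  have hxk : (p : ℤ) ^ k ∣ x := by
    rw [hx]
    exact_mod_cast Int.natCast_dvd_natCast.mpr (hpk_dvd_aux A ⟨m + 1, by rw [hA, mul_comm]⟩)
  have hx2 : ((p : ℤ)) ^ (2 * k) ∣ x ^ 2 := by
    rw [show 2 * k = k * 2 by ring, pow_mul]
    exact pow_dvd_pow_of_dvd hxk 2
  have hxT : ((p : ℤ)) ^ (2 * k) ∣ x * (Tn : ℤ) := by
    by_cases hall : ∀ i ∈ S, 2 * i ≠ B * p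
    · have h1 : (B * p) ∣ Tn := T_dvd p B hall
      have h2 : p ^ k ∣ Tn := (hpk_dvd_aux B ⟨m, by rw [hB, mul_comm]⟩).trans h1
      rw [show 2 * k = k + k by ring, pow_add]
      have h2' : (p : ℤ) ^ k ∣ (Tn : ℤ) := by exact_mod_cast Int.natCast_dvd_natCast.mpr h2
      exact mul_dvd_mul hxk h2'
    · push_neg at hall
      obtain ⟨i, hiS, h2i⟩ := hall
      have hipB : ¬ p ∣ i ∧ 1 ≤ i := by
        simp only [hS, mem_filter, mem_Ico] at hiS
        exact ⟨hiS.2, hiS.1.1⟩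
      have hp2 : p = 2 := by
        have hd : p ∣ 2 * i := by rw [h2i]; exact dvd_mul_left p B
        rcases (Nat.Prime.dvd_mul hp).mp hd with h | h
        · exact (Nat.prime_dvd_prime_iff_eq hp Nat.prime_two).mp h
        · exact absurd h hipB.1
      subst hp2
      have hBodd : ¬ 2 ∣ B := by
        intro h2B
        have : i = B := by omega
        exact hipB.1 (this ▸ h2B)
      have hNodd : ¬ 2 ∣ N := by
        rintro ⟨N', hN'⟩
        exact hBodd ⟨m * N', by rw [hB, hN']; ring⟩
      have hk1 : k = 1 := by
        by_contra hk2
        have : (2 : ℕ) ∣ 2 ^ (k - 1) := dvd_pow_self 2 (by omega)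
        exact hNodd (this.trans hdvd)
      have hmodd : ¬ 2 ∣ m := by
        rintro ⟨m', hm'⟩
        exact hBodd ⟨m' * N, by rw [hB, hm']; ring⟩
      have hA2 : 2 ∣ A := by
        rw [hA]
        exact Dvd.dvd.mul_right ⟨(m + 1) / 2, by omega⟩ N
      have h4x : ((2 : ℕ) : ℤ) ^ (2 * k) ∣ x := by
        rw [hk1, hx]
        norm_num
        obtain ⟨A', hA'⟩ := hA2
        exact_mod_cast Int.natCast_dvd_natCast.mpr ⟨A', by rw [hA']; ring⟩
      exact h4x.mul_right _
  -- the congruence for Rn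
  have hcong : ((p : ℤ)) ^ (2 * k) ∣
      (Rn : ℤ) - (-1) ^ S.card * ((Qn : ℤ) - x * (Tn : ℤ)) := by
    have h0 := prod_sub_mod S x
    rw [← hRcast] at h0
    have h1 : ((Qn : ℤ)) = ∏ i ∈ S, (i : ℤ) := by rw [hQn]; push_cast; rfl
    have h2 : ((Tn : ℤ)) = ∑ i ∈ S, ∏ j ∈ S.erase i, (j : ℤ) := by rw [hTn]; push_cast; rfl
    rw [h1, h2]
    exact hx2.trans h0
  -- combine: p^(2k) ∣ Qn * (c' - (-1)^card * c)
  have hmain : ((p : ℤ)) ^ (2 * k) ∣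
      (Qn : ℤ) * ((c m (N * p) : ℤ) - (-1) ^ S.card * (c m N : ℤ)) := by
    have e : (Qn : ℤ) * ((c m (N * p) : ℤ) - (-1) ^ S.card * (c m N : ℤ))
        = (c m N : ℤ) * ((Rn : ℤ) - (-1) ^ S.card * ((Qn : ℤ) - x * (Tn : ℤ)))
          - (-1) ^ S.card * (c m N : ℤ) * (x * (Tn : ℤ)) := by
      linear_combination iden
    rw [e]
    exact dvd_sub (hcong.mul_left _) (hxT.mul_left _)
  -- cancel Qn
  have hcop : IsCoprime ((p : ℤ) ^ (2 * k)) (Qn : ℤ) := by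
    have h1 : Nat.Coprime p Qn := by
      refine Nat.Coprime.prod_right ?_
      intro i hi
      simp only [hS, mem_filter, mem_Ico] at hi
      exact (hp.coprime_iff_not_dvd).mpr hi.2
    have h2 : Nat.Coprime (p ^ (2 * k)) Qn := Nat.Coprime.pow_left _ h1
    have h3 := Nat.Coprime.isCoprime h2
    push_cast at h3
    exact h3
  have final : ((p : ℤ)) ^ (2 * k) ∣ (c m (N * p) : ℤ) - (-1) ^ S.card * (c m N : ℤ) :=
    hcop.dvd_of_dvd_mul_left hmain
  have hcard : S.card = (p - 1) * (m * N) := by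
    rw [card_S p B hp0, ← hB, Nat.sub_mul, one_mul, mul_comm p B]
  rwa [hcard] at final

lemma key' (p m N k : ℕ) (hp : p.Prime) (hm : 0 < m) (hN : 0 < N) (hk : 0 < k)
    (hdvd : p ^ (k - 1) ∣ N) :
    ((p : ℤ) ^ (2 * k)) ∣
      (-1) ^ (m * (N * p)) * (c m (N * p) : ℤ) - (-1) ^ (m * N) * (c m N : ℤ) := by
  have h := (key p m N k hp hm hN hk hdvd).mul_left ((-1 : ℤ) ^ (m * (N * p)))
  have hexp : m * (N * p) + (p - 1) * (m * N) = (m * N) * (2 * p - 1) := by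
    obtain ⟨p', rfl⟩ : ∃ p', p = p' + 1 := ⟨p - 1, by have := hp.pos; omega⟩
    have h1 : (p' + 1) - 1 = p' := rfl
    have h2 : 2 * (p' + 1) - 1 = 2 * p' + 1 := by omega
    rw [h1, h2]
    ring
  have hpar : (-1 : ℤ) ^ ((m * N) * (2 * p - 1)) = (-1) ^ (m * N) := by
    rcases Nat.even_or_odd (m * N) with he | ho
    · rw [(he.mul_right _).neg_one_pow, he.neg_one_pow]
    · have hodd : Odd (2 * p - 1) := ⟨p - 1, by have := hp.pos; omega⟩
      rw [(ho.mul hodd).neg_one_pow, ho.neg_one_pow]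
  have e : (-1 : ℤ) ^ (m * (N * p)) *
        ((c m (N * p) : ℤ) - (-1) ^ ((p - 1) * (m * N)) * (c m N : ℤ))
      = (-1) ^ (m * (N * p)) * (c m (N * p) : ℤ) - (-1) ^ (m * N) * (c m N : ℤ) := by
    rw [mul_sub]
    congr 1
    rw [← mul_assoc, ← pow_add, hexp, hpar]
  rwa [e] at h

lemma prime_dvd (m n p : ℕ) (hm : 0 < m) (hn : 0 < n) (hp : p.Prime) (hpn : p ∣ n) :
    ((p : ℤ) ^ (2 * n.factorization p)) ∣
      ∑ d ∈ n.divisors, (-1 : ℤ) ^ (m * (n + d)) * moebius (n / d) * (c m d : ℤ) := by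
  classical
  set v := n.factorization p with hv
  have hv1 : 1 ≤ v := (Nat.Prime.factorization_pos_of_dvd hp hn.ne' hpn)
  set F : ℕ → ℤ := fun e => (-1 : ℤ) ^ (m * (n + n / e)) * moebius e * (c m (n / e) : ℤ)
    with hF
  -- step 1 : reindex d ↦ n / d
  have step1 : ∑ d ∈ n.divisors, (-1 : ℤ) ^ (m * (n + d)) * moebius (n / d) * (c m d : ℤ)
      = ∑ e ∈ n.divisors, F e := by
    rw [← Nat.sum_div_divisors n F]
    refine Finset.sum_congr rfl ?_
    intro d hd
    have hdvd : d ∣ n := (Nat.mem_divisors.mp hd).1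
    simp only [hF, Nat.div_div_self hdvd hn.ne']
  rw [step1]
  -- step 2 : restrict to the relevant index set
  set P := n.divisors.filter (fun e => ¬ p ∣ e) with hP
  have hPim : ∀ e ∈ P, p * e ∈ n.divisors := by
    intro e he
    simp only [hP, mem_filter, Nat.mem_divisors] at he
    refine Nat.mem_divisors.mpr ⟨?_, hn.ne'⟩
    exact Nat.Coprime.mul_dvd_of_dvd_of_dvd
      ((hp.coprime_iff_not_dvd).mpr he.2) hpn he.1.1
  set U := P ∪ P.image (fun e => p * e) with hU
  have hUsub : U ⊆ n.divisors := by
    intro x hx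
    rw [hU, Finset.mem_union] at hx
    rcases hx with hx | hx
    · exact Finset.filter_subset _ _ hx
    · obtain ⟨e, he, rfl⟩ := Finset.mem_image.mp hx
      exact hPim e he
  have step2 : ∑ e ∈ n.divisors, F e = ∑ e ∈ U, F e := by
    refine (Finset.sum_subset hUsub ?_).symm
    intro x hx hxU
    have hxd : x ∣ n := (Nat.mem_divisors.mp hx).1
    have hpx : p ∣ x := by
      by_contra hnpx
      exact hxU (Finset.mem_union_left _ (Finset.mem_filter.mpr ⟨hx, hnpx⟩))
    obtain ⟨y, rfl⟩ := hpx
    have hpy : p ∣ y := by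
      by_contra hnpy
      refine hxU (Finset.mem_union_right _ (Finset.mem_image.mpr ⟨y, ?_, rfl⟩))
      refine Finset.mem_filter.mpr ⟨Nat.mem_divisors.mpr ⟨dvd_trans ⟨p, mul_comm p y⟩ hxd, hn.ne'⟩, hnpy⟩
    have hsq : ¬ Squarefree (p * y) := by
      intro hsf
      have := hsf p (by obtain ⟨z, rfl⟩ := hpy; exact ⟨z, by ring⟩)
      exact hp.one_lt.ne' (Nat.isUnit_iff.mp this)
    simp [hF, moebius_eq_zero_of_not_squarefree hsq]
  rw [step2, hU]
  have hdisj : Disjoint P (P.image (fun e => p * e)) := by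
    rw [Finset.disjoint_left]
    intro a haP haI
    obtain ⟨e, he, rfl⟩ := Finset.mem_image.mp haI
    exact (Finset.mem_filter.mp haP).2 (Dvd.intro _ rfl)
  rw [Finset.sum_union hdisj, Finset.sum_image (by
    intro a _ b _ h
    exact Nat.eq_of_mul_eq_mul_left hp.pos h)]
  rw [← Finset.sum_add_distrib]
  refine Finset.dvd_sum ?_
  intro e heP
  simp only [hP, mem_filter, Nat.mem_divisors] at heP
  obtain ⟨⟨hedvd, -⟩, hnpe⟩ := heP
  have hcop : Nat.Coprime p e := (hp.coprime_iff_not_dvd).mpr hnpe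
  have hpe_dvd : p * e ∣ n := Nat.Coprime.mul_dvd_of_dvd_of_dvd hcop hpn hedvd
  have he1 : 1 ≤ e := Nat.pos_of_dvd_of_pos hedvd hn
  set N := n / (p * e) with hN
  have hNpos : 0 < N := Nat.div_pos (Nat.le_of_dvd hn hpe_dvd) (Nat.mul_pos hp.pos he1)
  have hnNe : n = N * (p * e) := (Nat.div_mul_cancel hpe_dvd).symm
  have hne2 : n / e = N * p := by
    rw [hnNe]
    rw [show N * (p * e) = (N * p) * e by ring]
    exact Nat.mul_div_cancel _ he1
  -- μ(p e) = - μ e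
  have hmu : moebius (p * e) = - moebius e := by
    rw [isMultiplicative_moebius.map_mul_of_coprime hcop, moebius_apply_prime hp]
    ring
  -- p^(v-1) ∣ N
  have hdvdN : p ^ (v - 1) ∣ N := by
    have h1 : p ^ v ∣ n := Nat.ordProj_dvd n p
    rw [hnNe] at h1
    have h2 : p ^ v = p ^ (v - 1) * p := by
      rw [← pow_succ]
      congr 1
      omega
    have h3 : p ^ (v - 1) * p ∣ (N * e) * p := by
      rw [← h2]
      rw [show N * e * p = N * (p * e) by ring]
      exact h1
    have h4 : p ^ (v - 1) ∣ N * e := (mul_dvd_mul_iff_right hp.pos.ne').mp h3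
    exact (Nat.Coprime.dvd_of_dvd_mul_right
      (Nat.Coprime.pow_left _ hcop) h4)
  have hkey := key' p m N v hp hm hNpos hv1 hdvdN
  -- express the pair sum
  have hsplit : F e + F (p * e)
      = ((-1 : ℤ) ^ (m * n) * moebius e) *
        ((-1) ^ (m * (N * p)) * (c m (N * p) : ℤ) - (-1) ^ (m * N) * (c m N : ℤ)) := by
    have hne3 : n / (p * e) = N := rfl
    have hpows : ∀ d : ℕ, (-1 : ℤ) ^ (m * (n + d)) = (-1) ^ (m * n) * (-1) ^ (m * d) := by
      intro d
      rw [← pow_add]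
      congr 1
      ring
    rw [hF]
    simp only [hne2, hne3, hmu, hpows]
    ring
  rw [hsplit]
  exact Dvd.dvd.mul_left hkey _

lemma integral_part (m n : ℕ) (hm : 0 < m) (hn : 0 < n) :
    ((n : ℤ) ^ 2) ∣
      ∑ d ∈ n.divisors, (-1 : ℤ) ^ (m * (n + d)) * moebius (n / d) * (c m d : ℤ) := by
  have hfact : ∏ p ∈ n.primeFactors, p ^ n.factorization p = n := by
    have h := Nat.factorization_prod_pow_eq_self hn.ne'
    rwa [Finsupp.prod] at h
  have hcast : (n : ℤ) ^ 2 = ∏ p ∈ n.primeFactors, (p : ℤ) ^ (2 * n.factorization p) := by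
    conv_lhs => rw [← hfact]
    push_cast
    rw [← Finset.prod_pow]
    refine Finset.prod_congr rfl ?_
    intro p _
    rw [← pow_mul, mul_comm (n.factorization p) 2]
  rw [hcast]
  refine Finset.prod_dvd_of_coprime ?_ ?_
  · intro p hp q hq hne
    have hp' := Nat.prime_of_mem_primeFactors hp
    have hq' := Nat.prime_of_mem_primeFactors hq
    have h1 : Nat.Coprime (p ^ (2 * n.factorization p)) (q ^ (2 * n.factorization q)) :=
      Nat.Coprime.pow _ _ ((Nat.coprime_primes hp' hq').mpr hne)
    have h2 := Nat.Coprime.isCoprime h1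
    show IsCoprime ((p : ℤ) ^ (2 * n.factorization p)) ((q : ℤ) ^ (2 * n.factorization q))
    push_cast at h2
    exact h2
  · intro p hp
    exact prime_dvd m n p hm hn (Nat.prime_of_mem_primeFactors hp)
      (Nat.dvd_of_mem_primeFactors hp)

end DTaux

open ArithmeticFunction in
/-- The integer `∑_{d | n} (−1)^(m(n+d)) · μ(n/d) · C((m+1)d − 1, md)` is nonnegative
and divisible by `n²` (integrality and nonnegativity of the numerical Donaldson–Thomas
invariant of the `(m+1)`-loop quiver). -/
theorem DT_nonneg_and_integral (m n : ℕ) (hm : 0 < m) (hn : 0 < n) :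
    0 ≤ ∑ d ∈ n.divisors,
          (-1 : ℤ) ^ (m * (n + d)) * moebius (n / d) *
            (((m + 1) * d - 1).choose (m * d) : ℤ) ∧
    ((n : ℤ) ^ 2 ∣
      ∑ d ∈ n.divisors,
        (-1 : ℤ) ^ (m * (n + d)) * moebius (n / d) *
          (((m + 1) * d - 1).choose (m * d) : ℤ)) := by
  constructor
  · simpa [DTaux.c] using DTaux.nonneg_part m n hm hn
  · simpa [DTaux.c] using DTaux.integral_part m n hm hn
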